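/- arXiv:1912.09988 — 5 statements merged into one kernel-verified Lean document; each statement's English description precedes it below -/
import Mathlib

section
/- Let a ∈ (0, 1/2). Then ∫₀^{1−a} dr/(a + (1−r)²) + ∫_{1−a}^{1} dr/( a·log(1/a)/log(1/(1−r)) + (1−r)² ) ≲ 1/√a, i.e. there is an absolute constant C such that the sum of these two integrals is at most C/√a. -/
open Real MeasureTheory intervalIntegral

-- First integral bound
lemma part1 {a : ℝ} (ha : 0 < a) :
    (∫ r in (0 : ℝ)..(1 - a), 1 / (a + (1 - r) ^ 2)) ≤ 2 / Real.sqrt a := by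
  have hs : 0 < Real.sqrt a := Real.sqrt_pos.2 ha
  have hs2 : Real.sqrt a ^ 2 = a := Real.sq_sqrt ha.le
  have h1 : (∫ r in (0 : ℝ)..(1 - a), 1 / (a + (1 - r) ^ 2))
      = ∫ x in a..1, 1 / (a + x ^ 2) := by
    have := intervalIntegral.integral_comp_sub_left (fun x : ℝ => 1 / (a + x ^ 2)) 1
      (a := 0) (b := 1 - a)
    simpa using this
  have h2 : ∀ x : ℝ, 1 / (a + x ^ 2) = (1/a) * (1 / (1 + (x / Real.sqrt a) ^ 2)) := by
    intro x
    rw [div_pow, hs2]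
    field_simp
  rw [h1]
  simp_rw [h2]
  rw [intervalIntegral.integral_const_mul, intervalIntegral.integral_comp_div
    (fun y : ℝ => 1 / (1 + y ^ 2)) hs.ne', integral_one_div_one_add_sq]
  have harct : Real.arctan (1 / Real.sqrt a) - Real.arctan (a / Real.sqrt a) ≤ 2 := by
    have h3 := Real.arctan_lt_pi_div_two (1 / Real.sqrt a)
    have h4 : 0 ≤ Real.arctan (a / Real.sqrt a) := by
      rw [← Real.arctan_zero]
      exact by simpa using Real.arctan_strictMono.monotone (by positivity : (0:ℝ) ≤ a / Real.sqrt a)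
    have := Real.pi_lt_d2
    linarith
  rw [smul_eq_mul]
  calc (1/a) * (Real.sqrt a * (Real.arctan (1 / Real.sqrt a) - Real.arctan (a / Real.sqrt a)))
      ≤ (1/a) * (Real.sqrt a * 2) := by
        apply mul_le_mul_of_nonneg_left _ (by positivity)
        exact mul_le_mul_of_nonneg_left harct hs.le
    _ = 2 / Real.sqrt a := by
        rw [eq_div_iff hs.ne']
        field_simp
        nlinarith [hs2]

lemma log_one_div_le {u : ℝ} (hu : 0 < u) : Real.log (1/u) ≤ 2 * u ^ (-(1/2) : ℝ) := by
  have hup : (0:ℝ) < u ^ (-(1/2) : ℝ) := Real.rpow_pos_of_pos hu _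
  have h1 := Real.log_le_sub_one_of_pos hup
  have h2 : Real.log (u ^ (-(1/2) : ℝ)) = -(1/2) * Real.log u := Real.log_rpow hu _
  have h3 : Real.log (1/u) = - Real.log u := by rw [one_div, Real.log_inv]
  linarith

lemma ptwise {a u : ℝ} (ha : 0 < a) (ha2 : a < 1/2) (hu : 0 < u) (hua : u ≤ a) :
    1 / (a * Real.log (1/a) / Real.log (1/u) + u ^ 2)
      ≤ (2 / (a * Real.log (1/a))) * u ^ (-(1/2) : ℝ) := by
  have hL : 0 < Real.log (1/a) := Real.log_pos (by rw [lt_div_iff₀ ha]; linarith)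
  have hlu : 0 < Real.log (1/u) := Real.log_pos (by rw [lt_div_iff₀ hu]; linarith)
  have hden0 : 0 < a * Real.log (1/a) / Real.log (1/u) := by positivity
  have hstep : 1 / (a * Real.log (1/a) / Real.log (1/u) + u ^ 2)
      ≤ 1 / (a * Real.log (1/a) / Real.log (1/u)) :=
    one_div_le_one_div_of_le hden0 (by nlinarith [sq_nonneg u])
  have heq : 1 / (a * Real.log (1/a) / Real.log (1/u))
      = Real.log (1/u) / (a * Real.log (1/a)) := by
    rw [one_div_div]
  calc 1 / (a * Real.log (1/a) / Real.log (1/u) + u ^ 2)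
      ≤ Real.log (1/u) / (a * Real.log (1/a)) := by rw [← heq]; exact hstep
    _ ≤ (2 * u ^ (-(1/2) : ℝ)) / (a * Real.log (1/a)) := by
        exact (div_le_div_iff_of_pos_right (by positivity : (0:ℝ) < a * Real.log (1/a))).2
          (log_one_div_le hu)
    _ = (2 / (a * Real.log (1/a))) * u ^ (-(1/2) : ℝ) := by ring

lemma part2 {a : ℝ} (ha : 0 < a) (ha2 : a < 1/2) :
    (∫ r in (1 - a)..1,
        1 / (a * Real.log (1 / a) / Real.log (1 / (1 - r)) + (1 - r) ^ 2))
      ≤ 6 / Real.sqrt a := by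
  have hL : 0 < Real.log (1/a) := Real.log_pos (by rw [lt_div_iff₀ ha]; linarith)
  set c : ℝ := 2 / (a * Real.log (1/a)) with hc
  have hcpos : 0 < c := by positivity
  set f : ℝ → ℝ := fun r => 1 / (a * Real.log (1 / a) / Real.log (1 / (1 - r)) + (1 - r) ^ 2)
    with hf
  set g : ℝ → ℝ := fun r => c * (1 - r) ^ (-(1/2) : ℝ) with hgdef
  have hle : 1 - a ≤ 1 := by linarith
  -- pointwise bound on Icc
  have hbound : ∀ r ∈ Set.Icc (1 - a) 1, f r ≤ g r := by
    intro r hr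
    rcases eq_or_lt_of_le hr.2 with h1 | h1
    · have : (1:ℝ) - r = 0 := by rw [h1]; ring
      simp only [hf, hgdef, this]
      rw [Real.zero_rpow (by norm_num)]
      norm_num
    · have hu : 0 < 1 - r := by linarith
      have hua : 1 - r ≤ a := by linarith [hr.1]
      exact ptwise ha ha2 hu hua
  have hfnonneg : ∀ r ∈ Set.Icc (1 - a) 1, 0 ≤ f r := by
    intro r hr
    rcases eq_or_lt_of_le hr.2 with h1 | h1
    · have : (1:ℝ) - r = 0 := by rw [h1]; ring
      simp [hf, this]
    · have hu : 0 < 1 - r := by linarith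
      have hlu : 0 < Real.log (1/(1-r)) := Real.log_pos (by rw [lt_div_iff₀ hu]; linarith [hr.1])
      have : 0 < a * Real.log (1/a) / Real.log (1/(1-r)) + (1-r)^2 := by positivity
      positivity
  -- integrability of g
  have hg_int : IntervalIntegrable g volume (1 - a) 1 := by
    have h0 : IntervalIntegrable (fun x : ℝ => x ^ (-(1/2) : ℝ)) volume a 0 :=
      intervalIntegral.intervalIntegrable_rpow' (by norm_num)
    have h1 := h0.comp_sub_left 1
    simp only [sub_zero] at h1
    exact h1.const_mul c
  -- integrability of f
  have hf_int : IntervalIntegrable f volume (1 - a) 1 := by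
    rw [intervalIntegrable_iff_integrableOn_Ioc_of_le hle]
    have hg_on : IntegrableOn g (Set.Ioc (1 - a) 1) volume := by
      rw [← intervalIntegrable_iff_integrableOn_Ioc_of_le hle]
      exact hg_int
    apply hg_on.integrable.mono'
    · apply Measurable.aestronglyMeasurable
      apply Measurable.div measurable_const
      apply Measurable.add
      · exact measurable_const.div (Real.measurable_log.comp
          (measurable_const.div (measurable_const.sub measurable_id)))
      · exact ((measurable_const.sub measurable_id).pow measurable_const)
    · filter_upwards [MeasureTheory.ae_restrict_mem measurableSet_Ioc] with r hr
      have hr' : r ∈ Set.Icc (1 - a) 1 := ⟨hr.1.le, hr.2⟩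
      rw [Real.norm_eq_abs, abs_of_nonneg (hfnonneg r hr')]
      exact hbound r hr'
  have hmono := intervalIntegral.integral_mono_on hle hf_int hg_int hbound
  -- compute integral of g
  have hgval : (∫ r in (1 - a)..1, g r) = c * (2 * Real.sqrt a) := by
    rw [hgdef]
    rw [intervalIntegral.integral_const_mul]
    have := intervalIntegral.integral_comp_sub_left (fun x : ℝ => x ^ (-(1/2) : ℝ)) 1
      (a := 1 - a) (b := 1)
    simp only [sub_self, sub_sub_cancel] at this
    rw [this, integral_rpow (Or.inl (by norm_num))]
    rw [Real.sqrt_eq_rpow]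
    rw [Real.zero_rpow (by norm_num)]
    have he : -(1/2:ℝ) + 1 = 1/2 := by norm_num
    rw [he]
    ring
  have hlog2 : (2:ℝ)/3 ≤ Real.log (1/a) := by
    have h2a : (2:ℝ) ≤ 1/a := by rw [le_div_iff₀ ha]; linarith
    have := Real.log_le_log (by norm_num) h2a
    have hl2 := Real.log_two_gt_d9
    linarith
  have hsq : 0 < Real.sqrt a := Real.sqrt_pos.2 ha
  have hsqa : Real.sqrt a * Real.sqrt a = a := Real.mul_self_sqrt ha.le
  have hfinal : c * (2 * Real.sqrt a) ≤ 6 / Real.sqrt a := by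
    rw [hc, div_mul_eq_mul_div, div_le_div_iff₀ (by positivity) hsq]
    nlinarith [hsqa, hsq, ha, hlog2]
  calc (∫ r in (1 - a)..1, f r) ≤ ∫ r in (1 - a)..1, g r := hmono
    _ = c * (2 * Real.sqrt a) := hgval
    _ ≤ 6 / Real.sqrt a := hfinal

/-- there is an absolute constant C such that for all a ∈ (0,1/2),
∫₀^{1−a} dr/(a + (1−r)²) + ∫_{1−a}^{1} dr/(a·log(1/a)/log(1/(1−r)) + (1−r)²) ≤ C/√a. -/
theorem stmt_3 : ∃ C : ℝ, 0 < C ∧ ∀ a : ℝ, 0 < a → a < 1 / 2 →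
    (∫ r in (0 : ℝ)..(1 - a), 1 / (a + (1 - r) ^ 2)) +
      (∫ r in (1 - a)..1,
        1 / (a * Real.log (1 / a) / Real.log (1 / (1 - r)) + (1 - r) ^ 2))
      ≤ C / Real.sqrt a := by
  refine ⟨8, by norm_num, fun a ha ha2 => ?_⟩
  have h1 := part1 ha
  have h2 := part2 ha ha2
  have hsq : 0 < Real.sqrt a := Real.sqrt_pos.2 ha
  have : (2:ℝ) / Real.sqrt a + 6 / Real.sqrt a = 8 / Real.sqrt a := by
    field_simp; ring
  linarith
end

section
/- Let E ⊂ T be a closed set with complementary arcs (a_n, b_n), i.e. T \ E = ⋃_n (a_n, b_n) where we identify T with parametrization e^{it}. Define the discrete measure μ = Σ_n (b_n − a_n)(δ_{a_n} + δ_{b_n}). If Σ_n (b_n − a_n) log(1/(b_n − a_n)) = +∞, then ∫_T log V₂(μ)(ζ) |dζ| = +∞, where V₂(μ)(ζ) = ∫_T dμ(e^{it})/|e^{it} − ζ|². -/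
open MeasureTheory

/-- The point e^{it} on the unit circle. -/
noncomputable def circlePt (t : ℝ) : ℂ := Complex.exp (t * Complex.I)

/-- The potential V₂(μ)(e^{it}) = Σ_n (b_n − a_n)(1/|e^{ia_n} − e^{it}|² + 1/|e^{ib_n} − e^{it}|²)
for the discrete measure μ = Σ_n (b_n − a_n)(δ_{a_n} + δ_{b_n}). -/
noncomputable def potV (a b : ℕ → ℝ) (t : ℝ) : ℝ :=
  ∑' n, (b n - a n) * (1 / ‖circlePt (a n) - circlePt t‖ ^ 2 +
    1 / ‖circlePt (b n) - circlePt t‖ ^ 2)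

lemma circlePt_norm (x : ℝ) : ‖circlePt x‖ = 1 := by
  simp [circlePt, Complex.norm_exp_ofReal_mul_I]

/-- Chord length is at most arc length. -/
lemma chord_le (x y : ℝ) (h1 : 0 ≤ y - x) (h2 : y - x ≤ Real.pi) :
    ‖circlePt y - circlePt x‖ ≤ y - x := by
  have h := Complex.norm_sub_le_angle (circlePt_norm y) (circlePt_norm x)
  rw [show circlePt y = Complex.exp (y * Complex.I) from rfl,
    show circlePt x = Complex.exp (x * Complex.I) from rfl,
    Complex.angle_exp_exp] at h
  have hself : toIocMod Real.two_pi_pos (-Real.pi) (y - x) = y - x := by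
    rw [toIocMod_eq_self]
    constructor
    · have := Real.pi_pos; linarith
    · linarith
  rwa [hself, abs_of_nonneg h1] at h

/-- Chord length is at least (2/π) times the circular distance. -/
lemma chord_lower (s t d : ℝ) (habs : |s - t| ≤ 2 * Real.pi)
    (hd1 : d ≤ |s - t|) (hd2 : d ≤ 2 * Real.pi - |s - t|) :
    2 / Real.pi * d ≤ ‖circlePt s - circlePt t‖ := by
  have h := Complex.mul_angle_le_norm_sub (circlePt_norm s) (circlePt_norm t)
  rw [show circlePt s = Complex.exp (s * Complex.I) from rfl,
    show circlePt t = Complex.exp (t * Complex.I) from rfl,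
    Complex.angle_exp_exp] at h
  have hpi := Real.pi_pos
  have key : d ≤ |toIocMod Real.two_pi_pos (-Real.pi) (s - t)| := by
    rcases le_or_gt (s - t) (-Real.pi) with h1 | h1
    · have habs' : |s - t| = -(s - t) := abs_of_nonpos (by linarith)
      have heq : toIocMod Real.two_pi_pos (-Real.pi) (s - t)
          = s - t + 2 * Real.pi := by
        have := toIocMod_add_right Real.two_pi_pos (-Real.pi) (s - t)
        rw [← this, toIocMod_eq_self]
        constructor
        · linarith [habs, abs_le.1 habs |>.1]
        · linarith
      rw [heq, abs_of_nonneg (by linarith [abs_le.1 habs |>.1])]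
      have := abs_le.1 habs
      linarith [hd2, habs'.symm ▸ hd2]
    · rcases le_or_gt (s - t) Real.pi with h2 | h2
      · have heq : toIocMod Real.two_pi_pos (-Real.pi) (s - t) = s - t := by
          rw [toIocMod_eq_self]; exact ⟨h1, by linarith⟩
        rw [heq]; exact hd1
      · have habs' : |s - t| = s - t := abs_of_nonneg (by linarith)
        have heq : toIocMod Real.two_pi_pos (-Real.pi) (s - t)
            = s - t - 2 * Real.pi := by
          have := toIocMod_add_right Real.two_pi_pos (-Real.pi) (s - t - 2 * Real.pi)
          rw [show s - t - 2 * Real.pi + 2 * Real.pi = s - t by ring] at this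
          rw [this, toIocMod_eq_self]
          constructor
          · linarith
          · linarith [abs_le.1 habs |>.2, habs']
        rw [heq, abs_of_nonpos (by linarith [abs_le.1 habs |>.2, habs'])]
        rw [habs'] at hd2
        linarith
  calc 2 / Real.pi * d ≤ 2 / Real.pi * |toIocMod Real.two_pi_pos (-Real.pi) (s - t)| := by
        gcongr
    _ ≤ _ := h

/-- if the complementary arcs (a_n, b_n) of a closed set E ⊂ T satisfy
Σ_n (b_n − a_n) log(1/(b_n − a_n)) = +∞, then ∫_T log V₂(μ)(ζ) |dζ| = +∞ for
μ = Σ_n (b_n − a_n)(δ_{a_n} + δ_{b_n}). -/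
theorem stmt_6 (a b : ℕ → ℝ)
    (hab : ∀ n, a n < b n)
    (hsub : ∀ n, Set.Ioo (a n) (b n) ⊆ Set.Ioo 0 (2 * Real.pi))
    (hsmall : ∀ n, b n - a n < 1)
    (hdisj : Pairwise (Function.onFun Disjoint fun n => Set.Ioo (a n) (b n)))
    (hdiv : Filter.Tendsto
      (fun N => ∑ n ∈ Finset.range N, (b n - a n) * Real.log (1 / (b n - a n)))
      Filter.atTop Filter.atTop) :
    ∫⁻ t in Set.Ioo 0 (2 * Real.pi), ENNReal.ofReal (Real.log (potV a b t)) = ⊤ := by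
  have hpi := Real.pi_pos
  have hpi3 := Real.pi_gt_three
  have hlen : ∀ n, 0 < b n - a n := fun n => sub_pos.2 (hab n)
  -- endpoints lie in [0, 2π]
  have h0 : ∀ n, 0 ≤ a n ∧ b n ≤ 2 * Real.pi := by
    intro n
    constructor
    · by_contra h
      push_neg at h
      have hm : a n < min (b n) 0 := lt_min (hab n) h
      have hle1 := min_le_left (b n) 0
      have hle2 := min_le_right (b n) 0
      have hp := hsub n (show (a n + min (b n) 0) / 2 ∈ Set.Ioo (a n) (b n) from
        ⟨by linarith, by linarith⟩)
      have := hp.1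
      linarith
    · by_contra h
      push_neg at h
      have hm : max (a n) (2 * Real.pi) < b n := max_lt (hab n) h
      have hle1 := le_max_left (a n) (2 * Real.pi)
      have hle2 := le_max_right (a n) (2 * Real.pi)
      have hp := hsub n (show (max (a n) (2 * Real.pi) + b n) / 2 ∈ Set.Ioo (a n) (b n) from
        ⟨by linarith, by linarith⟩)
      have := hp.2
      linarith
  -- endpoints of other arcs lie outside a given arc
  have hsep : ∀ m n, n ≠ m → ∀ s, s = a n ∨ s = b n → s ≤ a m ∨ b m ≤ s := by
    intro m n hnm s hs
    by_contra h
    push_neg at h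
    obtain ⟨h1, h2⟩ := h
    have hd := hdisj hnm
    rcases hs with rfl | rfl
    · have hm : a n < min (b n) (b m) := lt_min (hab n) h2
      have hle1 := min_le_left (b n) (b m)
      have hle2 := min_le_right (b n) (b m)
      exact Set.disjoint_left.1 hd
        (show (a n + min (b n) (b m)) / 2 ∈ Set.Ioo (a n) (b n) from ⟨by linarith, by linarith⟩)
        (show (a n + min (b n) (b m)) / 2 ∈ Set.Ioo (a m) (b m) from ⟨by linarith, by linarith⟩)
    · have hm : max (a n) (a m) < b n := max_lt (hab n) h1
      have hle1 := le_max_left (a n) (a m)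
      have hle2 := le_max_right (a n) (a m)
      exact Set.disjoint_left.1 hd
        (show (max (a n) (a m) + b n) / 2 ∈ Set.Ioo (a n) (b n) from ⟨by linarith, by linarith⟩)
        (show (max (a n) (a m) + b n) / 2 ∈ Set.Ioo (a m) (b m) from ⟨by linarith, by linarith⟩)
  -- lengths are summable
  have Slen : Summable (fun n => b n - a n) := by
    apply summable_of_sum_range_le (c := 2 * Real.pi) (fun n => (hlen n).le)
    intro N
    have hdN : (↑(Finset.range N) : Set ℕ).PairwiseDisjoint
        (fun i => Set.Ioo (a i) (b i)) := fun i _ j _ hij => hdisj hij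
    have h1 : ∑ i ∈ Finset.range N, volume (Set.Ioo (a i) (b i))
        ≤ volume (Set.Ioo (0 : ℝ) (2 * Real.pi)) := by
      rw [← measure_biUnion_finset hdN (fun i _ => measurableSet_Ioo)]
      exact measure_mono (Set.iUnion₂_subset fun i _ => hsub i)
    simp only [Real.volume_Ioo] at h1
    rw [← ENNReal.ofReal_sum_of_nonneg (fun i _ => (hlen i).le), sub_zero] at h1
    exact (ENNReal.ofReal_le_ofReal_iff (by positivity)).1 h1
  -- the key pointwise lower bound on the potential
  have hkey : ∀ m, ∀ t ∈ Set.Ioo (a m) (b m), 1 / (b m - a m) ≤ potV a b t := by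
    intro m t ht
    obtain ⟨ht1, ht2⟩ := ht
    obtain ⟨ht0, ht2π⟩ := hsub m ⟨ht1, ht2⟩
    set f : ℕ → ℝ := fun n => (b n - a n) * (1 / ‖circlePt (a n) - circlePt t‖ ^ 2 +
      1 / ‖circlePt (b n) - circlePt t‖ ^ 2) with hf
    have hfnonneg : ∀ n, 0 ≤ f n := by
      intro n
      have := (hlen n).le
      positivity
    set d : ℝ := min (t - a m) (b m - t) with hdd
    have hd : 0 < d := lt_min (by linarith) (by linarith)
    -- chord lower bound for endpoints of other arcs
    have hchord : ∀ n, n ≠ m → ∀ s, s = a n ∨ s = b n →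
        2 / Real.pi * d ≤ ‖circlePt s - circlePt t‖ := by
      intro n hnm s hs
      have hs02 : 0 ≤ s ∧ s ≤ 2 * Real.pi := by
        rcases hs with rfl | rfl
        · exact ⟨(h0 n).1, by linarith [(h0 n).2, (hab n).le]⟩
        · exact ⟨by linarith [(h0 n).1, (hab n).le], (h0 n).2⟩
      have hout := hsep m n hnm s hs
      have h0m := (h0 m).1
      have h2m := (h0 m).2
      apply chord_lower
      · rw [abs_le]; constructor <;> linarith [hs02.1, hs02.2]
      · rcases hout with h | h
        · rw [abs_of_nonpos (by linarith)]
          have := min_le_left (t - a m) (b m - t)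
          linarith
        · rw [abs_of_nonneg (by linarith)]
          have := min_le_right (t - a m) (b m - t)
          linarith
      · rcases hout with h | h
        · rw [abs_of_nonpos (by linarith)]
          have := min_le_right (t - a m) (b m - t)
          linarith [hs02.1]
        · rw [abs_of_nonneg (by linarith)]
          have := min_le_left (t - a m) (b m - t)
          linarith [hs02.2, h0m]
    have hCpos : 0 < 2 / Real.pi * d := by positivity
    -- summability of f
    have hmaj : Summable (Function.update
        (fun n => (b n - a n) * (2 / (2 / Real.pi * d) ^ 2)) m (f m)) :=
      (Slen.mul_right _).update m (f m)
    have hle : ∀ n, f n ≤ Function.update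
        (fun n => (b n - a n) * (2 / (2 / Real.pi * d) ^ 2)) m (f m) n := by
      intro n
      rcases eq_or_ne n m with rfl | hnm
      · rw [Function.update_self]
      · rw [Function.update_of_ne hnm]
        have hbound : ∀ s, s = a n ∨ s = b n →
            1 / ‖circlePt s - circlePt t‖ ^ 2 ≤ 1 / (2 / Real.pi * d) ^ 2 := by
          intro s hs
          apply one_div_le_one_div_of_le (by positivity)
          exact pow_le_pow_left₀ hCpos.le (hchord n hnm s hs) 2
        have h1 := hbound (a n) (Or.inl rfl)
        have h2 := hbound (b n) (Or.inr rfl)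
        have hsum2 : (1 / ‖circlePt (a n) - circlePt t‖ ^ 2 +
            1 / ‖circlePt (b n) - circlePt t‖ ^ 2) ≤ 2 / (2 / Real.pi * d) ^ 2 := by
          rw [show (2 : ℝ) / (2 / Real.pi * d) ^ 2
            = 1 / (2 / Real.pi * d) ^ 2 + 1 / (2 / Real.pi * d) ^ 2 by ring]
          exact add_le_add h1 h2
        exact mul_le_mul_of_nonneg_left hsum2 (hlen n).le
    have hsumf : Summable f := Summable.of_nonneg_of_le hfnonneg hle hmaj
    -- the m-th term is at least 1/(b m - a m)
    have hterm : 1 / (b m - a m) ≤ f m := by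
      have hchord_le : ‖circlePt (a m) - circlePt t‖ ≤ b m - a m := by
        have h1 : ‖circlePt t - circlePt (a m)‖ ≤ t - a m :=
          chord_le (a m) t (by linarith) (by linarith [hsmall m])
        rw [norm_sub_rev] at h1
        linarith
      have hchord_pos : 0 < ‖circlePt (a m) - circlePt t‖ := by
        have h0m := (h0 m).1
        have hlow : 2 / Real.pi * min (t - a m) (2 * Real.pi - (t - a m))
            ≤ ‖circlePt (a m) - circlePt t‖ := by
          apply chord_lower
          · rw [abs_of_nonpos (by linarith)]; linarith
          · rw [abs_of_nonpos (by linarith)]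
            have := min_le_left (t - a m) (2 * Real.pi - (t - a m)); linarith
          · rw [abs_of_nonpos (by linarith)]
            have := min_le_right (t - a m) (2 * Real.pi - (t - a m)); linarith
        have hm : 0 < min (t - a m) (2 * Real.pi - (t - a m)) :=
          lt_min (by linarith) (by linarith)
        calc (0 : ℝ) < 2 / Real.pi * min (t - a m) (2 * Real.pi - (t - a m)) := by positivity
          _ ≤ _ := hlow
      have h1 : 1 / (b m - a m) ^ 2 ≤ 1 / ‖circlePt (a m) - circlePt t‖ ^ 2 := by
        apply one_div_le_one_div_of_le (by positivity)
        exact pow_le_pow_left₀ (norm_nonneg _) hchord_le 2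
      have h2 : 0 ≤ 1 / ‖circlePt (b m) - circlePt t‖ ^ 2 := by positivity
      have h3 : (b m - a m) * (1 / (b m - a m) ^ 2) = 1 / (b m - a m) := by
        rw [one_div, one_div, sq, mul_inv, ← mul_assoc, mul_inv_cancel₀ (hlen m).ne', one_mul]
      calc 1 / (b m - a m) = (b m - a m) * (1 / (b m - a m) ^ 2) := h3.symm
        _ ≤ (b m - a m) * (1 / ‖circlePt (a m) - circlePt t‖ ^ 2 +
            1 / ‖circlePt (b m) - circlePt t‖ ^ 2) := by
          apply mul_le_mul_of_nonneg_left _ (hlen m).le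
          linarith
        _ = f m := rfl
    exact hterm.trans (Summable.le_tsum hsumf m (fun n _ => hfnonneg n))
  -- now the integral estimate
  set F : ℝ → ENNReal := fun t => ENNReal.ofReal (Real.log (potV a b t)) with hF
  set c : ℕ → ℝ := fun n => (b n - a n) * Real.log (1 / (b n - a n)) with hc
  have hcnonneg : ∀ n, 0 ≤ c n := by
    intro n
    apply mul_nonneg (hlen n).le
    apply Real.log_nonneg
    exact one_le_one_div (hlen n) (hsmall n).le
  have big : ∑' n, ENNReal.ofReal (c n) ≤ ∫⁻ t in Set.Ioo 0 (2 * Real.pi), F t := by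
    have step1 : ∀ n, ENNReal.ofReal (c n) ≤ ∫⁻ t in Set.Ioo (a n) (b n), F t := by
      intro n
      have hlog : 0 ≤ Real.log (1 / (b n - a n)) :=
        Real.log_nonneg (one_le_one_div (hlen n) (hsmall n).le)
      calc ENNReal.ofReal (c n)
          = ENNReal.ofReal (Real.log (1 / (b n - a n))) * ENNReal.ofReal (b n - a n) := by
            simp only [hc]
            rw [mul_comm (b n - a n), ENNReal.ofReal_mul hlog]
        _ = ENNReal.ofReal (Real.log (1 / (b n - a n))) * volume (Set.Ioo (a n) (b n)) := by
            rw [Real.volume_Ioo]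
        _ = ∫⁻ _ in Set.Ioo (a n) (b n),
              ENNReal.ofReal (Real.log (1 / (b n - a n))) := (setLIntegral_const _ _).symm
        _ ≤ ∫⁻ t in Set.Ioo (a n) (b n), F t := by
            apply setLIntegral_mono' measurableSet_Ioo
            intro t ht
            apply ENNReal.ofReal_le_ofReal
            exact Real.log_le_log (one_div_pos.2 (hlen n)) (hkey n t ht)
    calc ∑' n, ENNReal.ofReal (c n)
        ≤ ∑' n, ∫⁻ t in Set.Ioo (a n) (b n), F t := ENNReal.tsum_le_tsum step1
      _ = ∫⁻ t in ⋃ n, Set.Ioo (a n) (b n), F t :=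
          (lintegral_iUnion (fun n => measurableSet_Ioo) hdisj F).symm
      _ ≤ ∫⁻ t in Set.Ioo 0 (2 * Real.pi), F t :=
          lintegral_mono_set (Set.iUnion_subset hsub)
  have htop : ∑' n, ENNReal.ofReal (c n) = ⊤ := by
    by_contra h
    obtain ⟨N, hN⟩ := (hdiv.eventually_ge_atTop
      ((∑' n, ENNReal.ofReal (c n)).toReal + 1)).exists
    have h2 := ENNReal.sum_le_tsum (f := fun n => ENNReal.ofReal (c n)) (Finset.range N)
    have h3 := ENNReal.toReal_mono h h2
    rw [← ENNReal.ofReal_sum_of_nonneg (fun i _ => hcnonneg i),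
      ENNReal.toReal_ofReal (Finset.sum_nonneg fun i _ => hcnonneg i)] at h3
    simp only [hc] at h3
    linarith
  exact top_unique (htop ▸ big)
end

section
/- With E and μ as above (μ = Σ_n (b_n − a_n)(δ_{a_n} + δ_{b_n})), for each n and each t ∈ (a_n, b_n), the potential satisfies V₂(μ)(e^{it}) ≥ c·(b_n − a_n)/dist(e^{it}, {e^{ia_n}, e^{ib_n}})² ≥ c/(b_n − a_n), for an absolute constant c > 0. -/
open MeasureTheory

lemma circlePt_eq_circleMap (t : ℝ) : circlePt t = circleMap 0 1 t := by
  simp [circlePt, circleMap]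

lemma chord_le_s7 (t s : ℝ) : ‖circlePt t - circlePt s‖ ≤ |t - s| := by
  have h := (lipschitzWith_circleMap (0 : ℂ) 1).dist_le_mul t s
  simpa [circlePt_eq_circleMap, dist_eq_norm, Real.dist_eq] using h

lemma circlePt_ne (t s : ℝ) (h1 : 0 < t - s) (h2 : t - s < 2 * Real.pi) :
    circlePt t ≠ circlePt s := by
  simp only [circlePt, Ne, Complex.exp_eq_exp_iff_exists_int]
  rintro ⟨k, hk⟩
  have hIC : (t : ℂ) * Complex.I = ((s : ℂ) + (k : ℂ) * (2 * Real.pi)) * Complex.I := by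
    linear_combination hk
  have hC : (t : ℂ) = (s : ℂ) + (k : ℂ) * (2 * Real.pi) :=
    mul_right_cancel₀ Complex.I_ne_zero hIC
  have ht : t = s + (k : ℝ) * (2 * Real.pi) := by exact_mod_cast hC
  have hpi : (0 : ℝ) < 2 * Real.pi := by positivity
  have h1' : (0 : ℝ) < (k : ℝ) * (2 * Real.pi) := by linarith
  have h2' : (k : ℝ) * (2 * Real.pi) < 2 * Real.pi := by linarith
  have hk0 : (0 : ℝ) < (k : ℝ) := by nlinarith
  have hk1 : (k : ℝ) < 1 := by nlinarith
  have h0 : (0 : ℤ) < k := by exact_mod_cast hk0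
  have h1'' : k < 1 := by exact_mod_cast hk1
  omega

/-- with μ = Σ_n (b_n − a_n)(δ_{e^{ia_n}} + δ_{e^{ib_n}}), for each n
and t ∈ (a_n, b_n), V₂(μ)(e^{it}) ≥ c(b_n − a_n)/dist(e^{it},{e^{ia_n},e^{ib_n}})²
≥ c/(b_n − a_n), for an absolute constant c > 0. -/
theorem stmt_7 : ∃ c : ℝ, 0 < c ∧
    ∀ (a b : ℕ → ℝ), (∀ n, a n < b n) →
    (∀ n, Set.Ioo (a n) (b n) ⊆ Set.Ioo 0 (2 * Real.pi)) →
    ∀ n : ℕ, ∀ t ∈ Set.Ioo (a n) (b n),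
      ENNReal.ofReal (c / (b n - a n)) ≤
        ENNReal.ofReal (c * (b n - a n) /
          (min ‖circlePt t - circlePt (a n)‖ ‖circlePt t - circlePt (b n)‖) ^ 2) ∧
      ENNReal.ofReal (c * (b n - a n) /
          (min ‖circlePt t - circlePt (a n)‖ ‖circlePt t - circlePt (b n)‖) ^ 2) ≤
        ∑' m, ENNReal.ofReal ((b m - a m) *
          (1 / ‖circlePt t - circlePt (a m)‖ ^ 2 +
            1 / ‖circlePt t - circlePt (b m)‖ ^ 2)) := by
  refine ⟨1, one_pos, fun a b hab hsub n t ht => ?_⟩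
  obtain ⟨hta, htb⟩ := ht
  have hball : b n - a n > 0 := sub_pos.mpr (hab n)
  have hmem := hsub n ⟨hta, htb⟩
  have ht0 : 0 < t := hmem.1
  have ht2 : t < 2 * Real.pi := hmem.2
  have ha0 : 0 ≤ a n := by
    by_contra h
    push_neg at h
    have hx : a n / 2 ∈ Set.Ioo (a n) (b n) := ⟨by linarith, by linarith⟩
    exact absurd (hsub n hx).1 (by linarith)
  have hb2 : b n ≤ 2 * Real.pi := by
    by_contra h
    push_neg at h
    have hx : (b n + 2 * Real.pi) / 2 ∈ Set.Ioo (a n) (b n) := ⟨by linarith, by linarith⟩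
    exact absurd (hsub n hx).2 (by linarith)
  have hA : 0 < ‖circlePt t - circlePt (a n)‖ := by
    rw [norm_pos_iff, sub_ne_zero]
    exact circlePt_ne t (a n) (by linarith) (by linarith)
  have hB : 0 < ‖circlePt t - circlePt (b n)‖ := by
    rw [norm_pos_iff, sub_ne_zero]
    exact (circlePt_ne (b n) t (by linarith) (by linarith)).symm
  set dA := ‖circlePt t - circlePt (a n)‖ with hdA
  set dB := ‖circlePt t - circlePt (b n)‖ with hdB
  have hmin : 0 < min dA dB := lt_min hA hB
  have hminA : min dA dB ≤ dA := min_le_left _ _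
  have hminB : min dA dB ≤ dB := min_le_right _ _
  have hchord : min dA dB ≤ b n - a n := by
    have h1 := chord_le_s7 t (a n)
    have habs : |t - a n| ≤ b n - a n := by
      rw [abs_of_pos (by linarith)]; linarith
    exact le_trans hminA (le_trans h1 habs)
  constructor
  · apply ENNReal.ofReal_le_ofReal
    rw [one_mul, div_le_div_iff₀ hball (by positivity)]
    nlinarith [sq_nonneg (min dA dB)]
  · refine le_trans ?_ (ENNReal.le_tsum n)
    apply ENNReal.ofReal_le_ofReal
    rw [one_mul]
    have h1 : 1 / (min dA dB) ^ 2 ≤ 1 / dA ^ 2 + 1 / dB ^ 2 := by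
      rcases le_total dA dB with h | h
      · rw [min_eq_left h]
        have : 0 ≤ 1 / dB ^ 2 := by positivity
        linarith
      · rw [min_eq_right h]
        have : 0 ≤ 1 / dA ^ 2 := by positivity
        linarith
    calc (b n - a n) / (min dA dB) ^ 2
        = (b n - a n) * (1 / (min dA dB) ^ 2) := by ring
      _ ≤ (b n - a n) * (1 / dA ^ 2 + 1 / dB ^ 2) :=
          mul_le_mul_of_nonneg_left h1 (le_of_lt hball)
end

section
/- Let θ_n = 1/log(n) for n ≥ 3 and a_n = ε(θ_n − θ_{n+1}) for a fixed ε ∈ (0,1). Then Σ_{n≥3} a_n log(1/a_n) = +∞. -/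
open Real Filter

/-- The modified function `1/(n log n)`, set to `1` for `n ≤ 1` so that it is antitone. -/
noncomputable def Faux : ℕ → ℝ := fun n => if n ≤ 1 then 1 else 1 / (n * Real.log n)

lemma Faux_nonneg (n : ℕ) : 0 ≤ Faux n := by
  unfold Faux
  split
  · norm_num
  · rename_i h
    have hn : (2:ℝ) ≤ n := by exact_mod_cast Nat.lt_of_not_le h
    have : (0:ℝ) < Real.log n := Real.log_pos (by linarith)
    positivity

lemma Faux_antitone : ∀ ⦃m n : ℕ⦄, 0 < m → m ≤ n → Faux n ≤ Faux m := by
  intro m n hm hmn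
  unfold Faux
  by_cases hn : n ≤ 1
  · have : m ≤ 1 := le_trans hmn hn
    simp [hn, this]
  · have hn2 : (2:ℝ) ≤ n := by exact_mod_cast Nat.lt_of_not_le hn
    have hlogn : (0:ℝ) < Real.log n := Real.log_pos (by linarith)
    by_cases hm1 : m ≤ 1
    · rw [if_neg hn, if_pos hm1]
      rw [div_le_one (by positivity)]
      have h2 : Real.log 2 ≤ Real.log n := Real.log_le_log (by norm_num) hn2
      nlinarith [Real.log_two_gt_d9]
    · have hm2 : (2:ℝ) ≤ m := by exact_mod_cast Nat.lt_of_not_le hm1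
      have hmn' : (m:ℝ) ≤ n := by exact_mod_cast hmn
      have hlogm : (0:ℝ) < Real.log m := Real.log_pos (by linarith)
      have hlog : Real.log m ≤ Real.log n := Real.log_le_log (by linarith) hmn'
      rw [if_neg hn, if_neg hm1]
      have h1 : 0 < (m:ℝ) * Real.log m := mul_pos (by linarith) hlogm
      have h2 : (m:ℝ) * Real.log m ≤ (n:ℝ) * Real.log n :=
        mul_le_mul hmn' hlog hlogm.le (by linarith)
      exact one_div_le_one_div_of_le h1 h2

lemma Faux_pow (k : ℕ) : Faux (2 ^ (k+1)) = 1 / (2 ^ (k+1) * (((k:ℝ)+1) * Real.log 2)) := by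
  unfold Faux
  have h1 : ¬ ((2:ℕ) ^ (k + 1) ≤ 1) := by
    have : 2 ≤ 2 ^ (k+1) := by
      calc 2 = 2^1 := by norm_num
      _ ≤ 2^(k+1) := Nat.pow_le_pow_right (by norm_num) (by omega)
    omega
  rw [if_neg h1]
  push_cast
  rw [Real.log_pow]
  push_cast
  ring_nf

lemma not_summable_aux :
    ¬ Summable (fun n : ℕ => 1 / (((n:ℝ) + 4) * Real.log ((n:ℝ) + 4))) := by
  intro hs
  have hF4 : Summable (fun n : ℕ => Faux (n + 4)) := by
    refine hs.congr fun n => ?_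
    unfold Faux
    have : ¬ (n + 4 ≤ 1) := by omega
    simp only [this, if_neg]
    push_cast
    ring_nf
  have hF : Summable Faux := (summable_nat_add_iff (f := Faux) 4).mp hF4
  have hcond : Summable (fun k : ℕ => (2:ℝ) ^ k * Faux (2 ^ k)) :=
    (summable_condensed_iff_of_nonneg Faux_nonneg Faux_antitone).mpr hF
  have hshift : Summable (fun k : ℕ => (2:ℝ) ^ (k + 1) * Faux (2 ^ (k + 1))) :=
    (summable_nat_add_iff (f := fun k : ℕ => (2:ℝ) ^ k * Faux (2 ^ k)) 1).mpr hcond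
  have h2 : Summable (fun k : ℕ => (1 / Real.log 2) * (1 / ((k:ℝ) + 1))) := by
    refine hshift.congr fun k => ?_
    rw [Faux_pow k]
    have hpow : (0:ℝ) < (2:ℝ) ^ (k+1) := by positivity
    have hl2 : (0:ℝ) < Real.log 2 := Real.log_pos (by norm_num)
    push_cast
    field_simp
  have h3 : Summable (fun k : ℕ => 1 / ((k:ℝ) + 1)) := by
    have hl2 : Real.log 2 ≠ 0 := ne_of_gt (Real.log_pos (by norm_num))
    have := h2.mul_left (Real.log 2)
    refine this.congr fun k => ?_
    field_simp
  exact (mt (summable_nat_add_iff (f := fun n : ℕ => 1 / (n : ℝ)) 1).mp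
    Real.not_summable_one_div_natCast) (by exact_mod_cast h3)

lemma key_bound (ε : ℝ) (hε0 : 0 < ε) (hε1 : ε < 1) (x : ℝ) (hx : 3 ≤ x) :
    ε / 2 * (1 / ((x + 1) * Real.log (x + 1))) ≤
      (ε * (1 / Real.log x - 1 / Real.log (x + 1))) *
        Real.log (1 / (ε * (1 / Real.log x - 1 / Real.log (x + 1)))) := by
  have hx0 : (0:ℝ) < x := by linarith
  set L3 := Real.log x with hL3def
  set L4 := Real.log (x + 1) with hL4def
  have h1L3 : 1 ≤ L3 := by
    rw [hL3def, Real.le_log_iff_exp_le hx0]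
    have := Real.exp_one_lt_d9
    linarith
  have hL34 : L3 < L4 := Real.log_lt_log hx0 (by linarith)
  have hL4pos : (0:ℝ) < L4 := by linarith
  have hL3pos : (0:ℝ) < L3 := by linarith
  -- lower bound on L4 - L3
  have hdiff_lo : 1 / (x + 1) ≤ L4 - L3 := by
    have h := Real.log_le_sub_one_of_pos (show (0:ℝ) < x / (x + 1) by positivity)
    rw [Real.log_div (ne_of_gt hx0) (by linarith)] at h
    have heq : x / (x + 1) - 1 = -(1 / (x + 1)) := by field_simp; ring
    rw [heq] at h
    linarith
  -- upper bound on L4 - L3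
  have hdiff_hi : L4 - L3 ≤ 1 / x := by
    have h := Real.log_le_sub_one_of_pos (show (0:ℝ) < (x + 1) / x by positivity)
    rw [Real.log_div (by linarith) (ne_of_gt hx0)] at h
    have heq : (x + 1) / x - 1 = 1 / x := by field_simp; ring
    rw [heq] at h
    linarith
  have hd : 1 / L3 - 1 / L4 = (L4 - L3) / (L3 * L4) := by field_simp
  set d := 1 / L3 - 1 / L4 with hddef
  have hd_pos : 0 < d := by
    rw [hd]
    exact div_pos (by linarith) (by positivity)
  set a := ε * d with hadef
  have ha_pos : 0 < a := mul_pos hε0 hd_pos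
  -- L4 ≤ 2 L3
  have hL4le : L4 ≤ 2 * L3 := by
    have h1 : x + 1 ≤ x * x := by nlinarith
    have := Real.log_le_log (by linarith) h1
    rw [Real.log_mul (ne_of_gt hx0) (ne_of_gt hx0)] at this
    rw [hL4def, hL3def]
    linarith [this]
  -- a ≤ 1/x
  have ha_le : a ≤ 1 / x := by
    have hd_le : d ≤ 1 / x := by
      rw [hd]
      have h1 : (L4 - L3) / (L3 * L4) ≤ (L4 - L3) / 1 := by
        apply div_le_div_of_nonneg_left (by linarith) (by norm_num) ?_
        · nlinarith
      simp at h1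
      linarith
    calc a = ε * d := rfl
      _ ≤ 1 * d := by nlinarith
      _ = d := one_mul d
      _ ≤ 1 / x := hd_le
  -- log (1/a) ≥ L3
  have hlog_a : L3 ≤ Real.log (1 / a) := by
    have hxa : x ≤ 1 / a := by
      rw [le_div_iff₀ ha_pos]
      calc x * a ≤ x * (1 / x) := by nlinarith
        _ = 1 := by field_simp
    rw [hL3def]
    exact Real.log_le_log hx0 hxa
  -- a ≥ ε / ((x+1) L4^2)
  have ha_lo : ε / ((x + 1) * L4 ^ 2) ≤ a := by
    have hd_lo : 1 / ((x + 1) * L4 ^ 2) ≤ d := by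
      rw [hd]
      rw [div_le_div_iff₀ (by positivity) (by positivity)]
      have hup : 1 ≤ (L4 - L3) * (x + 1) := by
        have h0 := hdiff_lo
        rw [div_le_iff₀ (by linarith : (0:ℝ) < x + 1)] at h0
        linarith
      have h2 : 1 * (L3 * L4) ≤ ((L4 - L3) * (x + 1)) * (L3 * L4) :=
        mul_le_mul_of_nonneg_right hup (by positivity)
      have h34 : L3 * L4 ≤ L4 ^ 2 := by nlinarith
      have h3 : ((L4 - L3) * (x + 1)) * (L3 * L4) ≤ ((L4 - L3) * (x + 1)) * L4 ^ 2 :=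
        mul_le_mul_of_nonneg_left h34 (by nlinarith)
      nlinarith
    calc ε / ((x + 1) * L4 ^ 2) = ε * (1 / ((x + 1) * L4 ^ 2)) := by ring
      _ ≤ ε * d := by nlinarith
      _ = a := rfl
  -- conclude
  have hfinal : ε / ((x + 1) * L4 ^ 2) * (L4 / 2) ≤ a * Real.log (1 / a) := by
    apply mul_le_mul ha_lo ?_ (by linarith) (le_of_lt ha_pos)
    linarith
  have heq : ε / 2 * (1 / ((x + 1) * L4)) = ε / ((x + 1) * L4 ^ 2) * (L4 / 2) := by
    field_simp
  rw [heq]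
  exact hfinal

/-- with θ_n = 1/log n (n ≥ 3) and a_n = ε(θ_n − θ_{n+1}) for fixed
ε ∈ (0,1), one has Σ_{n≥3} a_n log(1/a_n) = +∞ (the partial sums tend to +∞). -/
theorem stmt_8 (ε : ℝ) (hε0 : 0 < ε) (hε1 : ε < 1) :
    Filter.Tendsto (fun N : ℕ => ∑ n ∈ Finset.range N,
      (ε * (1 / Real.log ((n : ℝ) + 3) - 1 / Real.log ((n : ℝ) + 4))) *
        Real.log (1 / (ε * (1 / Real.log ((n : ℝ) + 3) - 1 / Real.log ((n : ℝ) + 4)))))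
      Filter.atTop Filter.atTop := by
  have hbound : ∀ n : ℕ, ε / 2 * (1 / (((n:ℝ) + 4) * Real.log ((n:ℝ) + 4))) ≤
      (ε * (1 / Real.log ((n : ℝ) + 3) - 1 / Real.log ((n : ℝ) + 4))) *
        Real.log (1 / (ε * (1 / Real.log ((n : ℝ) + 3) - 1 / Real.log ((n : ℝ) + 4)))) := by
    intro n
    have h := key_bound ε hε0 hε1 ((n:ℝ) + 3) (by linarith [Nat.cast_nonneg (α := ℝ) n])
    have h43 : (n:ℝ) + 3 + 1 = (n:ℝ) + 4 := by ring
    rw [h43] at h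
    exact h
  have hnn : ∀ n : ℕ, 0 ≤
      (ε * (1 / Real.log ((n : ℝ) + 3) - 1 / Real.log ((n : ℝ) + 4))) *
        Real.log (1 / (ε * (1 / Real.log ((n : ℝ) + 3) - 1 / Real.log ((n : ℝ) + 4)))) := by
    intro n
    refine le_trans ?_ (hbound n)
    have h4 : (1:ℝ) < (n:ℝ) + 4 := by linarith [Nat.cast_nonneg (α := ℝ) n]
    have : (0:ℝ) < Real.log ((n:ℝ) + 4) := Real.log_pos h4
    positivity
  rw [← not_summable_iff_tendsto_nat_atTop_of_nonneg hnn]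
  intro hs
  have hg : Summable (fun n : ℕ => ε / 2 * (1 / (((n:ℝ) + 4) * Real.log ((n:ℝ) + 4)))) := by
    apply Summable.of_nonneg_of_le ?_ hbound hs
    intro n
    have h4 : (1:ℝ) < (n:ℝ) + 4 := by linarith [Nat.cast_nonneg (α := ℝ) n]
    have : (0:ℝ) < Real.log ((n:ℝ) + 4) := Real.log_pos h4
    positivity
  apply not_summable_aux
  have := hg.mul_left (2 / ε)
  refine this.congr fun n => ?_
  have hε : ε ≠ 0 := ne_of_gt hε0
  have hlog : (0:ℝ) < Real.log ((n:ℝ) + 4) :=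
    Real.log_pos (by linarith [Nat.cast_nonneg (α := ℝ) n])
  have ht : ((n:ℝ) + 4) * Real.log ((n:ℝ) + 4) ≠ 0 := by positivity
  field_simp
end

section
/- Let a ∈ (0, 1/2) and for r with 1 − r < a define k_r by 1 − r = a^{k_r} (so k_r = log(1−r)/log a > 1). Then the sum Σ_{k ≥ 2} a(1−r)²/(k²((1−r)² + a^{2k})) is comparable, with absolute constants, to a·log(1/a)/log(1/(1−r)). -/
open Real Finset Filter

/-- If κ = log(1/ε)/log(1/a) ≤ n then a^n ≤ ε. -/
private lemma aux_pow_le (a ε : ℝ) (ha : 0 < a) (ha1 : a < 1) (hε : 0 < ε) (n : ℕ)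
    (h : Real.log (1 / ε) / Real.log (1 / a) ≤ (n : ℝ)) : a ^ n ≤ ε := by
  have hL : 0 < Real.log (1 / a) := Real.log_pos (by rw [lt_div_iff₀ ha]; linarith)
  have h1 : Real.log (1 / ε) ≤ (n : ℝ) * Real.log (1 / a) := (div_le_iff₀ hL).1 h
  rw [one_div, one_div, Real.log_inv, Real.log_inv] at h1
  have key : (n : ℝ) * Real.log a ≤ Real.log ε := by
    have := h1; rw [mul_neg] at this; linarith
  calc a ^ n = Real.exp ((n : ℝ) * Real.log a) := by
        rw [Real.exp_nat_mul, Real.exp_log ha]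
    _ ≤ Real.exp (Real.log ε) := Real.exp_le_exp.2 key
    _ = ε := Real.exp_log hε

/-- If n ≤ κ = log(1/ε)/log(1/a) then ε ≤ a^n. -/
private lemma aux_le_pow (a ε : ℝ) (ha : 0 < a) (ha1 : a < 1) (hε : 0 < ε) (n : ℕ)
    (h : (n : ℝ) ≤ Real.log (1 / ε) / Real.log (1 / a)) : ε ≤ a ^ n := by
  have hL : 0 < Real.log (1 / a) := Real.log_pos (by rw [lt_div_iff₀ ha]; linarith)
  have h1 : (n : ℝ) * Real.log (1 / a) ≤ Real.log (1 / ε) := (le_div_iff₀ hL).1 h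
  rw [one_div, one_div, Real.log_inv, Real.log_inv] at h1
  have key : Real.log ε ≤ (n : ℝ) * Real.log a := by
    have := h1; rw [mul_neg] at this; linarith
  calc ε = Real.exp (Real.log ε) := (Real.exp_log hε).symm
    _ ≤ Real.exp ((n : ℝ) * Real.log a) := Real.exp_le_exp.2 key
    _ = a ^ n := by rw [Real.exp_nat_mul, Real.exp_log ha]

/-- Tail of the sum of 1/k². -/
private lemma tail_sq (K : ℕ) (hK : 2 ≤ K) :
    ∑' n : ℕ, (1 : ℝ) / ((n : ℝ) + K) ^ 2 ≤ 1 / ((K : ℝ) - 1) := by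
  have hK2 : (2 : ℝ) ≤ (K : ℝ) := by exact_mod_cast hK
  set g : ℕ → ℝ := fun n => 1 / ((n : ℝ) + K - 1) with hg
  have hgpos : ∀ n : ℕ, (0 : ℝ) < (n : ℝ) + K - 1 := by
    intro n; have : (0 : ℝ) ≤ n := Nat.cast_nonneg n; linarith
  have hnn : ∀ n : ℕ, 0 ≤ g n - g (n + 1) := by
    intro n
    have h1 := hgpos n
    have h2 := hgpos (n + 1)
    have : g (n + 1) ≤ g n := by
      apply one_div_le_one_div_of_le h1
      push_cast; linarith
    linarith
  have htel : HasSum (fun n : ℕ => g n - g (n + 1)) (1 / ((K : ℝ) - 1)) := by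
    rw [hasSum_iff_tendsto_nat_of_nonneg hnn]
    have heq : ∀ n : ℕ, ∑ i ∈ range n, (g i - g (i + 1)) = g 0 - g n := fun n =>
      Finset.sum_range_sub' g n
    simp only [heq]
    have h0 : g 0 = 1 / ((K : ℝ) - 1) := by simp [hg]
    rw [h0]
    have : Tendsto g atTop (nhds 0) := by
      have h0' : Tendsto (fun n : ℕ => (n : ℝ) + ((K : ℝ) - 1)) atTop atTop :=
        tendsto_atTop_add_const_right _ _ tendsto_natCast_atTop_atTop
      have h1 : Tendsto (fun n : ℕ => (n : ℝ) + K - 1) atTop atTop :=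
        h0'.congr (fun n => by ring)
      simpa [hg, one_div, Function.comp_def] using (tendsto_inv_atTop_zero : Filter.Tendsto (fun r : ℝ => r⁻¹) atTop (nhds 0)).comp h1
    simpa using tendsto_const_nhds.sub this
  have hsq : Summable (fun n : ℕ => (1 : ℝ) / ((n : ℝ) + K) ^ 2) := by
    have hbase : Summable (fun n : ℕ => (1 : ℝ) / (n : ℝ) ^ 2) :=
      summable_one_div_nat_pow.2 one_lt_two
    have := (summable_nat_add_iff K).2 hbase
    apply this.congr
    intro n; push_cast; ring_nf
  have hle : ∀ n : ℕ, (1 : ℝ) / ((n : ℝ) + K) ^ 2 ≤ g n - g (n + 1) := by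
    intro n
    have h1 := hgpos n
    have h2 : (0 : ℝ) < (n : ℝ) + K := by linarith
    have heq : g n - g (n + 1) = 1 / (((n : ℝ) + K - 1) * ((n : ℝ) + K)) := by
      rw [hg]
      push_cast
      rw [div_sub_div _ _ (by linarith : ((n:ℝ) + K - 1) ≠ 0) (by push_cast; linarith : ((n:ℝ) + 1 + K - 1) ≠ 0)]
      have : ((n:ℝ) + 1 + K - 1) = (n : ℝ) + K := by ring
      rw [this]
      congr 1
      ring
    rw [heq]
    apply one_div_le_one_div_of_le
    · positivity
    · nlinarith
  calc ∑' n : ℕ, (1 : ℝ) / ((n : ℝ) + K) ^ 2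
      ≤ ∑' n : ℕ, (g n - g (n + 1)) := Summable.tsum_le_tsum hle hsq htel.summable
    _ = 1 / ((K : ℝ) - 1) := htel.tsum_eq

/-- Geometric sum bound. -/
private lemma my_geom_le (m : ℕ) : ∑ j ∈ range m, (9 / 16 : ℝ) ^ j ≤ 16 / 7 := by
  have h := Summable.sum_le_tsum (range m) (fun i _ => by positivity)
    (summable_geometric_of_lt_one (by norm_num : (0:ℝ) ≤ 9/16) (by norm_num))
  rw [tsum_geometric_of_lt_one (by norm_num) (by norm_num)] at h
  calc ∑ j ∈ range m, (9 / 16 : ℝ) ^ j ≤ (1 - 9/16 : ℝ)⁻¹ := h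
    _ = 16 / 7 := by norm_num

/-- Single step geometric growth of t(k) = ε²/(k² a^{2k}). -/
private lemma head_step (a ε : ℝ) (ha : 0 < a) (ha2 : a < 1 / 2) (hε : 0 < ε) (m : ℕ)
    (hm : 2 ≤ m) :
    ε ^ 2 / ((m : ℝ) ^ 2 * a ^ (2 * m)) ≤
      (9 / 16) * (ε ^ 2 / (((m : ℝ) + 1) ^ 2 * a ^ (2 * (m + 1)))) := by
  have hm2 : (2 : ℝ) ≤ (m : ℝ) := by exact_mod_cast hm
  have hd1 : (0 : ℝ) < (m : ℝ) ^ 2 * a ^ (2 * m) := by positivity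
  have hd2 : (0 : ℝ) < ((m : ℝ) + 1) ^ 2 * a ^ (2 * (m + 1)) := by positivity
  have hpow : a ^ (2 * (m + 1)) = a ^ (2 * m) * a ^ 2 := by
    rw [← pow_add]; ring_nf
  have haa : a ^ 2 ≤ 1 / 4 := by nlinarith
  have hmm' : ((m : ℝ) + 1) ^ 2 ≤ (9 / 4) * (m : ℝ) ^ 2 := by nlinarith
  have hkey : ((m : ℝ) + 1) ^ 2 * a ^ 2 ≤ (9 / 16) * (m : ℝ) ^ 2 := by
    nlinarith [mul_le_mul hmm' haa (by positivity : (0:ℝ) ≤ a ^ 2)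
      (by positivity : (0:ℝ) ≤ (9 / 4) * (m : ℝ) ^ 2)]
  rw [mul_div_assoc', div_le_div_iff₀ hd1 hd2]
  calc ε ^ 2 * (((m : ℝ) + 1) ^ 2 * a ^ (2 * (m + 1)))
      = (ε ^ 2 * a ^ (2 * m)) * (((m : ℝ) + 1) ^ 2 * a ^ 2) := by rw [hpow]; ring
    _ ≤ (ε ^ 2 * a ^ (2 * m)) * ((9 / 16) * (m : ℝ) ^ 2) := by
        apply mul_le_mul_of_nonneg_left hkey; positivity
    _ = 9 / 16 * ε ^ 2 * ((m : ℝ) ^ 2 * a ^ (2 * m)) := by ring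

/-- Iterated geometric growth. -/
private lemma head_geom (a ε : ℝ) (ha : 0 < a) (ha2 : a < 1 / 2) (hε : 0 < ε) :
    ∀ (j k : ℕ), 2 ≤ k →
      ε ^ 2 / ((k : ℝ) ^ 2 * a ^ (2 * k)) ≤
        (9 / 16) ^ j * (ε ^ 2 / (((k + j : ℕ) : ℝ) ^ 2 * a ^ (2 * (k + j)))) := by
  intro j
  induction j with
  | zero => intro k hk; simp
  | succ j ih =>
    intro k hk
    have h1 := ih k hk
    have h2 := head_step a ε ha ha2 hε (k + j) (by omega)
    calc ε ^ 2 / ((k : ℝ) ^ 2 * a ^ (2 * k))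
        ≤ (9 / 16) ^ j * (ε ^ 2 / (((k + j : ℕ) : ℝ) ^ 2 * a ^ (2 * (k + j)))) := h1
      _ ≤ (9 / 16) ^ j * ((9 / 16) * (ε ^ 2 / ((((k + j : ℕ) : ℝ) + 1) ^ 2 * a ^ (2 * (k + j + 1))))) := by
          apply mul_le_mul_of_nonneg_left h2 (by positivity)
      _ = (9 / 16) ^ (j + 1) * (ε ^ 2 / (((k + (j + 1) : ℕ) : ℝ) ^ 2 * a ^ (2 * (k + (j + 1))))) := by
          push_cast
          ring_nf

set_option maxHeartbeats 2000000 in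
/-- for a ∈ (0,1/2) and r with 1 − r < a, the sum
Σ_{k≥2} a(1−r)²/(k²((1−r)² + a^{2k})) is comparable with absolute constants to
a·log(1/a)/log(1/(1−r)). -/
theorem stmt_14 : ∃ c C : ℝ, 0 < c ∧ 0 < C ∧
    ∀ a r : ℝ, 0 < a → a < 1 / 2 → 1 - a < r → r < 1 →
    c * (a * Real.log (1 / a) / Real.log (1 / (1 - r))) ≤
      (∑' k : ℕ, a * (1 - r) ^ 2 /
        ((k + 2 : ℝ) ^ 2 * ((1 - r) ^ 2 + a ^ (2 * (k + 2))))) ∧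
    (∑' k : ℕ, a * (1 - r) ^ 2 /
        ((k + 2 : ℝ) ^ 2 * ((1 - r) ^ 2 + a ^ (2 * (k + 2))))) ≤
      C * (a * Real.log (1 / a) / Real.log (1 / (1 - r))) := by
  refine ⟨1 / 16, 100, by norm_num, by norm_num, fun a r ha ha2 hr1 hr2 => ?_⟩
  have ha1 : a < 1 := by linarith
  set ε : ℝ := 1 - r with hεdef
  have hε0 : 0 < ε := by rw [hεdef]; linarith
  have hεa : ε < a := by rw [hεdef]; linarith
  set L : ℝ := Real.log (1 / a) with hLdef
  set M : ℝ := Real.log (1 / ε) with hMdef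
  have hL : 0 < L := Real.log_pos (by rw [lt_div_iff₀ ha]; linarith)
  have hLM : L < M := by
    rw [hLdef, hMdef]
    apply Real.log_lt_log (by positivity)
    rw [div_lt_div_iff₀ ha hε0]
    linarith
  have hM : 0 < M := hL.trans hLM
  set κ : ℝ := M / L with hκdef
  have hκ1 : 1 < κ := (one_lt_div hL).2 hLM
  have hκ0 : 0 < κ := by linarith
  have haLM : a * L / M = a / κ := by
    rw [hκdef]
    field_simp
  set f : ℕ → ℝ :=
    fun k => a * ε ^ 2 / (((k : ℝ) + 2) ^ 2 * (ε ^ 2 + a ^ (2 * (k + 2)))) with hfdef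
  have hd : ∀ n : ℕ, (0 : ℝ) < ((n : ℝ) + 2) ^ 2 * (ε ^ 2 + a ^ (2 * (n + 2))) := by
    intro n; positivity
  have hf0 : ∀ n, 0 ≤ f n := by
    intro n; rw [hfdef]; positivity
  have hfle : ∀ n : ℕ, f n ≤ a * (1 / ((n : ℝ) + 2) ^ 2) := by
    intro n
    have h1 : ((n : ℝ) + 2) ^ 2 * ε ^ 2 ≤ ((n : ℝ) + 2) ^ 2 * (ε ^ 2 + a ^ (2 * (n + 2))) := by
      apply mul_le_mul_of_nonneg_left _ (by positivity)
      nlinarith [pow_pos ha (2 * (n + 2))]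
    have h2 : f n ≤ a * ε ^ 2 / (((n : ℝ) + 2) ^ 2 * ε ^ 2) :=
      div_le_div_of_nonneg_left (by positivity) (by positivity) h1
    calc f n ≤ a * ε ^ 2 / (((n : ℝ) + 2) ^ 2 * ε ^ 2) := h2
      _ = a * (1 / ((n : ℝ) + 2) ^ 2) := by
          have hne : ((n : ℝ) + 2) ^ 2 ≠ 0 := by positivity
          have hne2 : (ε : ℝ) ^ 2 ≠ 0 := by positivity
          field_simp
  have hsum2 : Summable (fun n : ℕ => a * (1 / ((n : ℝ) + 2) ^ 2)) := by
    have hbase : Summable (fun n : ℕ => (1 : ℝ) / (n : ℝ) ^ 2) :=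
      summable_one_div_nat_pow.2 one_lt_two
    have h := ((summable_nat_add_iff 2).2 hbase).mul_left a
    apply h.congr
    intro n; push_cast; ring_nf
  have hsum : Summable f := Summable.of_nonneg_of_le hf0 hfle hsum2
  set K : ℕ := ⌈κ⌉₊ with hKdef
  have hκK : κ ≤ (K : ℝ) := Nat.le_ceil κ
  have hKκ : (K : ℝ) < κ + 1 := Nat.ceil_lt_add_one hκ0.le
  have hK2 : 2 ≤ K := by
    have h1 : (1 : ℝ) < (K : ℝ) := lt_of_lt_of_le hκ1 hκK
    have h2 : 1 < K := by exact_mod_cast h1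
    omega
  have hK2' : (2 : ℝ) ≤ (K : ℝ) := by exact_mod_cast hK2
  have hpow_le : ∀ n : ℕ, κ ≤ (n : ℝ) → a ^ (2 * n) ≤ ε ^ 2 := by
    intro n hn
    have h := aux_pow_le a ε ha ha1 hε0 n hn
    calc a ^ (2 * n) = (a ^ n) ^ 2 := by rw [mul_comm, pow_mul]
      _ ≤ ε ^ 2 := pow_le_pow_left₀ (by positivity) h 2
  have hpow_ge : ∀ n : ℕ, (n : ℝ) ≤ κ → ε ^ 2 ≤ a ^ (2 * n) := by
    intro n hn
    have h := aux_le_pow a ε ha ha1 hε0 n hn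
    calc ε ^ 2 ≤ (a ^ n) ^ 2 := pow_le_pow_left₀ hε0.le h 2
      _ = a ^ (2 * n) := by rw [mul_comm, pow_mul]
  have hlow : 1 / 16 * (a * L / M) ≤ ∑' k, f k := by
    rw [haLM]
    set s : Finset ℕ := Finset.Ico (K - 2) (2 * K - 2) with hs
    have hcard : s.card = K := by rw [hs, Nat.card_Ico]; omega
    have hterm : ∀ n ∈ s, a / (8 * (K : ℝ) ^ 2) ≤ f n := by
      intro n hn
      rw [hs, Finset.mem_Ico] at hn
      have hn1 : K ≤ n + 2 := by omega
      have hn2 : n + 2 ≤ 2 * K := by omega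
      have hc1 : (K : ℝ) ≤ (n : ℝ) + 2 := by exact_mod_cast hn1
      have hc2 : (n : ℝ) + 2 ≤ 2 * (K : ℝ) := by exact_mod_cast hn2
      have hpa : a ^ (2 * (n + 2)) ≤ ε ^ 2 := by
        apply hpow_le (n + 2)
        have : ((n + 2 : ℕ) : ℝ) = (n : ℝ) + 2 := by push_cast; ring
        rw [this]
        exact le_trans hκK hc1
      have hD : ((n : ℝ) + 2) ^ 2 * (ε ^ 2 + a ^ (2 * (n + 2))) ≤
          (2 * (K : ℝ)) ^ 2 * (2 * ε ^ 2) := by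
        apply mul_le_mul (by nlinarith) (by nlinarith) (by positivity) (by positivity)
      calc a / (8 * (K : ℝ) ^ 2) = a * ε ^ 2 / ((2 * (K : ℝ)) ^ 2 * (2 * ε ^ 2)) := by
            rw [div_eq_div_iff (by positivity) (by positivity)]
            ring
        _ ≤ f n := by
            rw [hfdef]
            exact div_le_div_of_nonneg_left (by positivity) (hd n) hD
    have hsumlb : (K : ℝ) * (a / (8 * (K : ℝ) ^ 2)) ≤ ∑ n ∈ s, f n := by
      have h := Finset.card_nsmul_le_sum s f _ hterm
      rwa [hcard, nsmul_eq_mul] at h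
    have hst : ∑ n ∈ s, f n ≤ ∑' k, f k := Summable.sum_le_tsum s (fun i _ => hf0 i) hsum
    have heq : (K : ℝ) * (a / (8 * (K : ℝ) ^ 2)) = a / (8 * (K : ℝ)) := by
      have hKne : (K : ℝ) ≠ 0 := by positivity
      field_simp
    have hfinal : 1 / 16 * (a / κ) ≤ a / (8 * (K : ℝ)) := by
      have h8 : 8 * (K : ℝ) ≤ 16 * κ := by linarith
      calc 1 / 16 * (a / κ) = a / (16 * κ) := by rw [div_mul_div_comm, one_mul]
        _ ≤ a / (8 * (K : ℝ)) := div_le_div_of_nonneg_left ha.le (by positivity) h8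
    rw [heq] at hsumlb
    linarith
  have hupp : ∑' k, f k ≤ 100 * (a * L / M) := by
    rw [haLM]
    have hcast2 : ((K - 2 : ℕ) : ℝ) = (K : ℝ) - 2 := by
      rw [Nat.cast_sub hK2]; norm_num
    have hcast1 : ((K - 1 : ℕ) : ℝ) = (K : ℝ) - 1 := by
      rw [Nat.cast_sub (by omega : 1 ≤ K)]; norm_num
    have hK1pos : (0 : ℝ) < (K : ℝ) - 1 := by linarith
    have hfrac : 1 / ((K : ℝ) - 1) ≤ 2 / κ := by
      rw [div_le_div_iff₀ hK1pos hκ0]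
      linarith
    have hfrac2 : 1 / ((K : ℝ) - 1) ^ 2 ≤ 1 / ((K : ℝ) - 1) := by
      apply one_div_le_one_div_of_le hK1pos
      nlinarith [mul_nonneg (by linarith : (0:ℝ) ≤ (K:ℝ) - 1) (by linarith : (0:ℝ) ≤ (K:ℝ) - 2)]
    -- tail bound
    have htail_term : ∀ n : ℕ, f (n + (K - 2)) ≤ a * (1 / ((n : ℝ) + K) ^ 2) := by
      intro n
      have h1 := hfle (n + (K - 2))
      have h2 : ((n + (K - 2) : ℕ) : ℝ) + 2 = (n : ℝ) + K := by
        push_cast [hcast2]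
        ring
      rwa [h2] at h1
    have hs1 : Summable (fun n : ℕ => f (n + (K - 2))) := (summable_nat_add_iff (K - 2)).2 hsum
    have hs2 : Summable (fun n : ℕ => a * ((1 : ℝ) / ((n : ℝ) + K) ^ 2)) := by
      have hbase : Summable (fun n : ℕ => (1 : ℝ) / (n : ℝ) ^ 2) :=
        summable_one_div_nat_pow.2 one_lt_two
      have h := ((summable_nat_add_iff K).2 hbase).mul_left a
      apply h.congr
      intro n; push_cast; ring_nf
    have htail : ∑' n : ℕ, f (n + (K - 2)) ≤ a * (1 / ((K : ℝ) - 1)) := by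
      calc ∑' n : ℕ, f (n + (K - 2)) ≤ ∑' n : ℕ, a * ((1 : ℝ) / ((n : ℝ) + K) ^ 2) :=
            Summable.tsum_le_tsum htail_term hs1 hs2
        _ = a * ∑' n : ℕ, (1 : ℝ) / ((n : ℝ) + K) ^ 2 := tsum_mul_left
        _ ≤ a * (1 / ((K : ℝ) - 1)) := by
            apply mul_le_mul_of_nonneg_left (tail_sq K hK2) ha.le
    -- head bound
    have hhead_term : ∀ i ∈ Finset.range (K - 2),
        f i ≤ a * ((9 / 16 : ℝ) ^ (K - 3 - i) * (1 / ((K : ℝ) - 1) ^ 2)) := by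
      intro i hi
      rw [Finset.mem_range] at hi
      have hstep1 : f i ≤ a * (ε ^ 2 / (((i : ℝ) + 2) ^ 2 * a ^ (2 * (i + 2)))) := by
        have hden : ((i : ℝ) + 2) ^ 2 * a ^ (2 * (i + 2)) ≤
            ((i : ℝ) + 2) ^ 2 * (ε ^ 2 + a ^ (2 * (i + 2))) := by
          apply mul_le_mul_of_nonneg_left _ (by positivity)
          nlinarith [sq_nonneg ε]
        have h := div_le_div_of_nonneg_left
          (by positivity : (0 : ℝ) ≤ a * ε ^ 2) (by positivity) hden
        calc f i ≤ a * ε ^ 2 / (((i : ℝ) + 2) ^ 2 * a ^ (2 * (i + 2))) := h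
          _ = a * (ε ^ 2 / (((i : ℝ) + 2) ^ 2 * a ^ (2 * (i + 2)))) := by
              rw [mul_div_assoc]
      have hgeom := head_geom a ε ha ha2 hε0 (K - 3 - i) (i + 2) (by omega)
      have hidx : i + 2 + (K - 3 - i) = K - 1 := by omega
      rw [hidx] at hgeom
      have hcasti : ((i + 2 : ℕ) : ℝ) = (i : ℝ) + 2 := by push_cast; ring
      rw [hcasti] at hgeom
      have htK : ε ^ 2 / (((K - 1 : ℕ) : ℝ) ^ 2 * a ^ (2 * (K - 1))) ≤
          1 / ((K : ℝ) - 1) ^ 2 := by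
        have hKκ' : ((K - 1 : ℕ) : ℝ) ≤ κ := by
          rw [hcast1]; linarith
        have hge : ε ^ 2 ≤ a ^ (2 * (K - 1)) := hpow_ge (K - 1) hKκ'
        have hden2 : ((K : ℝ) - 1) ^ 2 * ε ^ 2 ≤
            ((K - 1 : ℕ) : ℝ) ^ 2 * a ^ (2 * (K - 1)) := by
          rw [hcast1]
          apply mul_le_mul_of_nonneg_left hge (by positivity)
        calc ε ^ 2 / (((K - 1 : ℕ) : ℝ) ^ 2 * a ^ (2 * (K - 1)))
            ≤ ε ^ 2 / (((K : ℝ) - 1) ^ 2 * ε ^ 2) :=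
              div_le_div_of_nonneg_left (by positivity) (by positivity) hden2
          _ = 1 / ((K : ℝ) - 1) ^ 2 := by
              rw [div_eq_div_iff (by positivity) (by positivity)]
              ring
      calc f i ≤ a * (ε ^ 2 / (((i : ℝ) + 2) ^ 2 * a ^ (2 * (i + 2)))) := hstep1
        _ ≤ a * ((9 / 16 : ℝ) ^ (K - 3 - i) *
            (ε ^ 2 / (((K - 1 : ℕ) : ℝ) ^ 2 * a ^ (2 * (K - 1))))) := by
            apply mul_le_mul_of_nonneg_left hgeom ha.le
        _ ≤ a * ((9 / 16 : ℝ) ^ (K - 3 - i) * (1 / ((K : ℝ) - 1) ^ 2)) := by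
            apply mul_le_mul_of_nonneg_left _ ha.le
            apply mul_le_mul_of_nonneg_left htK (by positivity)
    have hhead : ∑ i ∈ Finset.range (K - 2), f i ≤
        a * (1 / ((K : ℝ) - 1) ^ 2) * (16 / 7) := by
      have hsum_geom : ∑ i ∈ Finset.range (K - 2), (9 / 16 : ℝ) ^ (K - 3 - i) ≤ 16 / 7 := by
        have hrefl := Finset.sum_range_reflect (fun j => (9 / 16 : ℝ) ^ j) (K - 2)
        have h77 : ∑ i ∈ Finset.range (K - 2), (9 / 16 : ℝ) ^ (K - 3 - i) =
            ∑ j ∈ Finset.range (K - 2), (9 / 16 : ℝ) ^ j := by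
          rw [← hrefl]
          apply Finset.sum_congr rfl
          intro i hi
          congr 1 <;> omega
        rw [h77]
        exact my_geom_le (K - 2)
      calc ∑ i ∈ Finset.range (K - 2), f i
          ≤ ∑ i ∈ Finset.range (K - 2),
              a * ((9 / 16 : ℝ) ^ (K - 3 - i) * (1 / ((K : ℝ) - 1) ^ 2)) :=
            Finset.sum_le_sum hhead_term
        _ = a * (1 / ((K : ℝ) - 1) ^ 2) * ∑ i ∈ Finset.range (K - 2), (9 / 16 : ℝ) ^ (K - 3 - i) := by
            rw [Finset.mul_sum]
            apply Finset.sum_congr rfl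
            intro i _; ring
        _ ≤ a * (1 / ((K : ℝ) - 1) ^ 2) * (16 / 7) := by
            apply mul_le_mul_of_nonneg_left hsum_geom (by positivity)
    have hsplit := Summable.sum_add_tsum_nat_add (f := f) (K - 2) hsum
    have hA : a * (1 / ((K : ℝ) - 1) ^ 2) * (16 / 7) ≤ 32 / 7 * (a / κ) := by
      have h1 : 1 / ((K : ℝ) - 1) ^ 2 ≤ 2 / κ := le_trans hfrac2 hfrac
      calc a * (1 / ((K : ℝ) - 1) ^ 2) * (16 / 7) ≤ a * (2 / κ) * (16 / 7) := by
            apply mul_le_mul_of_nonneg_right (mul_le_mul_of_nonneg_left h1 ha.le) (by norm_num)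
        _ = 32 / 7 * (a / κ) := by ring
    have hB : a * (1 / ((K : ℝ) - 1)) ≤ 2 * (a / κ) := by
      calc a * (1 / ((K : ℝ) - 1)) ≤ a * (2 / κ) := mul_le_mul_of_nonneg_left hfrac ha.le
        _ = 2 * (a / κ) := by ring
    have haκ : (0 : ℝ) ≤ a / κ := by positivity
    calc ∑' k, f k = ∑ i ∈ Finset.range (K - 2), f i + ∑' n : ℕ, f (n + (K - 2)) :=
          hsplit.symm
      _ ≤ a * (1 / ((K : ℝ) - 1) ^ 2) * (16 / 7) + a * (1 / ((K : ℝ) - 1)) :=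
          add_le_add hhead htail
      _ ≤ 32 / 7 * (a / κ) + 2 * (a / κ) := add_le_add hA hB
      _ ≤ 100 * (a / κ) := by linarith
  exact ⟨hlow, hupp⟩
end
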